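/- Let r ≥ 1 and let (v_1,…,v_r) be a system of linear functionals on ℂ[x] with moment matrix M, and let n ∈ ℕ be such that Δ_n ≠ 0 and Δ_{n+1} ≠ 0, where Δ_m is the determinant of the m×m leading principal submatrix of M (Δ_0 := 1). If q_n is a type I linear form on the step-line for the index n with respect to (v_1,…,v_r), then its leading coefficient satisfies lc(q_n) = Δ_n / Δ_{n+1}. -/

import Mathlib

open Polynomial Finset

noncomputable section

/-- A linear functional on `ℂ[x]`. -/
abbrev LF := Polynomial ℂ →ₗ[ℂ] ℂ

/-- The moment matrix of a system of `r` linear functionals (0-indexed: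
`v j` is the paper's `v_{j+1}`): entry `(n, r*k+j)` is `⟨v_{j+1}, x^{k+n}⟩`. -/
def momentMatrix (r : ℕ) (v : ℕ → LF) (n ℓ : ℕ) : ℂ :=
  v (ℓ % r) (Polynomial.X ^ (ℓ / r + n))

/-- `Δ_m`: determinant of the `m × m` leading principal submatrix of the
moment matrix of `v` (`Δ_0 = 1`). -/
def Delta (r : ℕ) (v : ℕ → LF) (m : ℕ) : ℂ :=
  Matrix.det (Matrix.of fun i j : Fin m => momentMatrix r v i j)

/-- For `n = r m + k` with `k < r`, a type I linear form on the step-line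
for index `n` is `q_n = Σ_{j<r} Ap j · v_j` with the stated degree bounds and
orthogonality/normalisation; its leading coefficient is `(Ap k).coeff m`,
and it equals `Δ_n / Δ_{n+1}`. -/
theorem stmt7 (r : ℕ) (hr : 1 ≤ r) (v : ℕ → LF) (m k : ℕ) (hk : k < r)
    (hΔn : Delta r v (r * m + k) ≠ 0) (hΔn1 : Delta r v (r * m + k + 1) ≠ 0)
    (Ap : ℕ → Polynomial ℂ)
    (hdeg1 : ∀ j, j ≤ k → (Ap j).degree ≤ (m : WithBot ℕ))
    (hdeg2 : ∀ j, k < j → j < r → (Ap j).degree < (m : WithBot ℕ))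
    (horth : ∀ ℓ, ℓ < r * m + k →
      ∑ j ∈ Finset.range r, v j (Ap j * Polynomial.X ^ ℓ) = 0)
    (hnorm : ∑ j ∈ Finset.range r, v j (Ap j * Polynomial.X ^ (r * m + k)) = 1) :
    (Ap k).coeff m = Delta r v (r * m + k) / Delta r v (r * m + k + 1) := by
  have hr0 : 0 < r := hr
  set n := r * m + k with hn
  have hcz : ∀ j, k < j → j < r → (Ap j).coeff m = 0 := fun j h1 h2 =>
    Polynomial.coeff_eq_zero_of_degree_lt (hdeg2 j h1 h2)
  have hnatdeg : ∀ j, j < r → (Ap j).natDegree ≤ m := by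
    intro j hj
    rcases le_or_gt j k with h | h
    · exact Polynomial.natDegree_le_iff_degree_le.2 (hdeg1 j h)
    · exact Polynomial.natDegree_le_iff_degree_le.2 (le_of_lt (hdeg2 j h hj))
  -- expand each functional value as a finite sum
  have hexp : ∀ ℓ : ℕ, ∀ j ∈ Finset.range r, v j (Ap j * Polynomial.X ^ ℓ) =
      ∑ s ∈ Finset.range (m+1), (Ap j).coeff s * v j (Polynomial.X ^ (s + ℓ)) := by
    intro ℓ j hj
    rw [Finset.mem_range] at hj
    conv_lhs => rw [Polynomial.as_sum_range' (Ap j) (m+1) (Nat.lt_succ_of_le (hnatdeg j hj))]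
    rw [Finset.sum_mul, map_sum]
    refine Finset.sum_congr rfl fun s _ => ?_
    have : (Polynomial.monomial s ((Ap j).coeff s)) * Polynomial.X ^ ℓ
        = ((Ap j).coeff s) • Polynomial.X ^ (s + ℓ) := by
      rw [← Polynomial.C_mul_X_pow_eq_monomial, mul_assoc, ← pow_add,
        ← Polynomial.smul_eq_C_mul]
    rw [this, map_smul, smul_eq_mul]
  -- reindex the double sum
  have hre : ∀ ℓ : ℕ,
      ∑ j ∈ Finset.range r, ∑ s ∈ Finset.range (m+1),
        (Ap j).coeff s * v j (Polynomial.X ^ (s + ℓ))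
      = ∑ c ∈ Finset.range (r * (m+1)),
        (Ap (c % r)).coeff (c / r) * v (c % r) (Polynomial.X ^ (c / r + ℓ)) := by
    intro ℓ
    rw [← Finset.sum_product']
    refine Finset.sum_nbij' (fun p => r * p.2 + p.1) (fun c => (c % r, c / r)) ?_ ?_ ?_ ?_ ?_
    · rintro ⟨j, s⟩ hp
      simp only [Finset.mem_product, Finset.mem_range] at hp ⊢
      have h1 : r * s + j < r * (s + 1) := by rw [Nat.mul_succ]; omega
      have h2 : r * (s + 1) ≤ r * (m + 1) := Nat.mul_le_mul_left r (by omega)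
      omega
    · intro c hc
      simp only [Finset.mem_range, Finset.mem_product] at hc ⊢
      exact ⟨Nat.mod_lt _ hr0, Nat.div_lt_of_lt_mul hc⟩
    · rintro ⟨j, s⟩ hp
      simp only [Finset.mem_product, Finset.mem_range] at hp
      simp [Nat.mul_add_mod, Nat.mod_eq_of_lt hp.1, Nat.mul_add_div hr0,
        Nat.div_eq_of_lt hp.1]
    · intro c _
      exact Nat.div_add_mod c r
    · rintro ⟨j, s⟩ hp
      simp only [Finset.mem_product, Finset.mem_range] at hp
      simp [Nat.mul_add_mod, Nat.mod_eq_of_lt hp.1, Nat.mul_add_div hr0,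
        Nat.div_eq_of_lt hp.1]
  -- drop the vanishing tail terms
  have hsplit : ∀ ℓ : ℕ,
      ∑ c ∈ Finset.range (n+1),
        (Ap (c % r)).coeff (c / r) * v (c % r) (Polynomial.X ^ (c / r + ℓ))
      = ∑ c ∈ Finset.range (r * (m+1)),
        (Ap (c % r)).coeff (c / r) * v (c % r) (Polynomial.X ^ (c / r + ℓ)) := by
    intro ℓ
    refine Finset.sum_subset ?_ ?_
    · intro c hc
      simp only [Finset.mem_range] at hc ⊢
      have hms : r * (m + 1) = r * m + r := Nat.mul_succ r m
      omega
    · intro c hc hnc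
      simp only [Finset.mem_range] at hc hnc
      have hms : r * (m + 1) = r * m + r := Nat.mul_succ r m
      obtain ⟨t, ht, htk, htr⟩ : ∃ t, c = r * m + t ∧ k < t ∧ t < r := ⟨c - r * m, by omega⟩
      subst ht
      have h1 : (r * m + t) % r = t := by rw [Nat.mul_add_mod, Nat.mod_eq_of_lt htr]
      have h2 : (r * m + t) / r = m := by
        rw [Nat.mul_add_div hr0, Nat.div_eq_of_lt htr]
        omega
      rw [h1, h2, hcz t htk htr, zero_mul]
  -- the linear system solved by the coefficient vector
  set A : Matrix (Fin (n+1)) (Fin (n+1)) ℂ :=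
    Matrix.of (fun i j : Fin (n+1) => momentMatrix r v i j) with hA
  set a : Fin (n+1) → ℂ := fun c => (Ap ((c : ℕ) % r)).coeff ((c : ℕ) / r) with ha
  have hsys : ∀ ℓ : ℕ, ∑ c ∈ Finset.range (n+1),
      (Ap (c % r)).coeff (c / r) * v (c % r) (Polynomial.X ^ (c / r + ℓ))
      = ∑ j ∈ Finset.range r, v j (Ap j * Polynomial.X ^ ℓ) := by
    intro ℓ
    rw [hsplit, ← hre, Finset.sum_congr rfl (hexp ℓ)]
  have hmul : A.mulVec a = Pi.single (Fin.last n) 1 := by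
    funext ℓ
    have hL : A.mulVec a ℓ = ∑ c ∈ Finset.range (n+1),
        (Ap (c % r)).coeff (c / r) * v (c % r) (Polynomial.X ^ (c / r + (ℓ : ℕ))) := by
      rw [Matrix.mulVec, dotProduct]
      rw [← Fin.sum_univ_eq_sum_range
        (fun c => (Ap (c % r)).coeff (c / r) * v (c % r) (Polynomial.X ^ (c / r + (ℓ:ℕ))))]
      refine Finset.sum_congr rfl fun c _ => ?_
      simp only [hA, ha, Matrix.of_apply, momentMatrix]
      ring
    rw [hL, hsys]
    rcases eq_or_ne ℓ (Fin.last n) with h | h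
    · subst h
      simpa [Fin.last] using hnorm
    · have hℓn : (ℓ : ℕ) ≠ n := fun hh => h (Fin.ext (by simpa [Fin.last] using hh))
      have hlt : (ℓ : ℕ) < n := by have := ℓ.isLt; omega
      rw [horth _ hlt, Pi.single_eq_of_ne h]
  -- Cramer's rule
  have hdetA : A.det = Delta r v (n + 1) := rfl
  have h1 : A.adjugate.mulVec (A.mulVec a) = A.det • a := by
    rw [Matrix.mulVec_mulVec, Matrix.adjugate_mul, Matrix.smul_mulVec,
      Matrix.one_mulVec]
  rw [hmul] at h1
  have h2 : (A.adjugate.mulVec (Pi.single (Fin.last n) 1)) (Fin.last n)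
      = A.adjugate (Fin.last n) (Fin.last n) := by
    simp [Matrix.mulVec_single]
  have hadj : A.adjugate (Fin.last n) (Fin.last n) = Delta r v n := by
    rw [Matrix.adjugate_apply]
    rw [Matrix.det_succ_row _ (Fin.last n)]
    rw [Finset.sum_eq_single (Fin.last n)]
    · rw [Matrix.updateRow_self, Pi.single_eq_same]
      have hpow : ((-1 : ℂ)) ^ ((Fin.last n : ℕ) + (Fin.last n : ℕ)) = 1 :=
        Even.neg_one_pow ⟨n, by simp [Fin.last, two_mul]⟩
      rw [hpow, one_mul, one_mul]
      have : ((A.updateRow (Fin.last n) (Pi.single (Fin.last n) 1)).submatrix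
          (Fin.last n).succAbove (Fin.last n).succAbove)
          = Matrix.of (fun i j : Fin n => momentMatrix r v i j) := by
        ext i j
        simp only [Matrix.submatrix_apply, Fin.succAbove_last]
        rw [Matrix.updateRow_ne (Fin.castSucc_lt_last i).ne]
        simp [hA, momentMatrix]
      rw [this]
      rfl
    · intro b _ hb
      rw [Matrix.updateRow_self, Pi.single_eq_of_ne hb, mul_zero, zero_mul]
    · intro h; exact absurd (Finset.mem_univ _) h
  have hfin : A.det * a (Fin.last n) = Delta r v n := by
    have := congrFun h1 (Fin.last n)
    rw [h2, hadj] at this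
    simpa [smul_eq_mul] using this.symm
  have halast : a (Fin.last n) = (Ap k).coeff m := by
    have h1' : ((Fin.last n : Fin (n+1)) : ℕ) = n := rfl
    have hmod : n % r = k := by rw [hn, Nat.mul_add_mod, Nat.mod_eq_of_lt hk]
    have hdiv : n / r = m := by rw [hn, Nat.mul_add_div hr0, Nat.div_eq_of_lt hk]; omega
    simp [ha, h1', hmod, hdiv]
  rw [halast] at hfin
  rw [hdetA] at hfin
  rw [eq_div_iff hΔn1]
  rw [mul_comm] at hfin
  exact hfin
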